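/- Let L > 0 and b > 0 be real numbers, and let s, t, χ be positive real numbers with χ² ≠ L. For each positive integer N set n_N = (b+1)·N, δ_N = (n_N + L + 1)/N, z_N = s/√(N·δ_N), w_N = t/√(N·δ_N), λ_N = χ/√(N·δ_N). Then lim_{N→∞} q̂_{N−1}^{(n_N,L)}(z_N·w_N | λ_N²) · (z_N·w_N)^{L} · ((1+z_N²)(1+w_N²))^{−(n_N+L+1)/2} = (1/(χ² − L)) · (s·t)^L · ( (χ²−L)·E_{1,L+1}(s·t) + 1/Γ(L) ) · e^{−(s²+t²)/2}, where all powers with real exponents are real powers. -/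

import Mathlib

open Finset Filter

noncomputable section

/-- `q_N^{(n,L)}(y)`. -/
def qS (n L : ℝ) (N : ℕ) (y : ℝ) : ℝ :=
  ∑ k ∈ Finset.range (N + 1),
    Real.Gamma (L + n + 1) / (Real.Gamma ((k : ℝ) + L + 1) * Real.Gamma (n + 1 - k)) * y ^ k

/-- `q̂_N^{(n,L)}(y|x)`. -/
def qhat (n L : ℝ) (N : ℕ) (y x : ℝ) : ℝ :=
  qS n L N y + (1 / (n * x - L)) * (Real.Gamma (L + n + 1) / (Real.Gamma (n + 1) * Real.Gamma L))

/-- The two-parametric Mittag-Leffler function `E_{1,β}(y)` with first parameter `1`. -/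
def mittagLeffler1 (β : ℝ) (y : ℝ) : ℝ := ∑' k : ℕ, y ^ k / Real.Gamma ((k : ℝ) + β)

/- ### Auxiliary lemmas on the Gamma function -/

lemma interp_upper {x a : ℝ} (hx : 0 < x) (ha : 0 ≤ a) (ha1 : a ≤ 1) :
    Real.Gamma (x + a) ≤ Real.Gamma x * x ^ a := by
  have h := Real.convexOn_log_Gamma.2 (Set.mem_Ioi.2 hx)
    (Set.mem_Ioi.2 (by linarith : (0:ℝ) < x + 1))
    (by linarith : (0:ℝ) ≤ 1 - a) ha (by ring)
  have hxa : (1 - a) • x + a • (x + 1) = x + a := by simp [smul_eq_mul]; ring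
  rw [hxa] at h
  simp only [Function.comp_apply, smul_eq_mul] at h
  have hΓ : 0 < Real.Gamma x := Real.Gamma_pos_of_pos hx
  have hΓ1 : Real.Gamma (x + 1) = x * Real.Gamma x := by
    rw [Real.Gamma_add_one hx.ne']
  rw [hΓ1, Real.log_mul hx.ne' hΓ.ne'] at h
  have h2 : Real.log (Real.Gamma (x + a)) ≤ Real.log (Real.Gamma x * x ^ a) := by
    rw [Real.log_mul hΓ.ne' (Real.rpow_pos_of_pos hx a).ne', Real.log_rpow hx]
    nlinarith [h]
  have := Real.exp_le_exp.2 h2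
  rwa [Real.exp_log (Real.Gamma_pos_of_pos (by linarith)), Real.exp_log (by positivity)] at this

lemma interp_lower {x a : ℝ} (hx : 0 < x) (ha : 0 ≤ a) (ha1 : a ≤ 1) :
    Real.Gamma x * x ≤ Real.Gamma (x + a) * (x + a) ^ (1 - a) := by
  have hxa : 0 < x + a := by linarith
  have h := Real.convexOn_log_Gamma.2 (Set.mem_Ioi.2 hxa)
    (Set.mem_Ioi.2 (by linarith : (0:ℝ) < x + a + 1))
    ha (by linarith : (0:ℝ) ≤ 1 - a) (by ring)
  have hpt : a • (x + a) + (1 - a) • (x + a + 1) = x + 1 := by simp [smul_eq_mul]; ring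
  rw [hpt] at h
  simp only [Function.comp_apply, smul_eq_mul] at h
  have hΓa : 0 < Real.Gamma (x + a) := Real.Gamma_pos_of_pos hxa
  have hΓ1 : Real.Gamma (x + a + 1) = (x + a) * Real.Gamma (x + a) := Real.Gamma_add_one hxa.ne'
  have hΓx1 : Real.Gamma (x + 1) = x * Real.Gamma x := Real.Gamma_add_one hx.ne'
  rw [hΓ1, hΓx1, Real.log_mul hxa.ne' hΓa.ne',
    Real.log_mul hx.ne' (Real.Gamma_pos_of_pos hx).ne'] at h
  have h2 : Real.log (Real.Gamma x * x) ≤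
      Real.log (Real.Gamma (x + a) * (x + a) ^ (1 - a)) := by
    rw [Real.log_mul hΓa.ne' (Real.rpow_pos_of_pos hxa _).ne', Real.log_rpow hxa,
      Real.log_mul (Real.Gamma_pos_of_pos hx).ne' hx.ne']
    nlinarith [h]
  have := Real.exp_le_exp.2 h2
  rwa [Real.exp_log (by positivity), Real.exp_log (by positivity)] at this

lemma gamma_add_le_aux : ∀ n : ℕ, ∀ a x : ℝ, 0 ≤ a → a ≤ n → 1 ≤ x →
    Real.Gamma (x + a) ≤ Real.Gamma x * (x + a) ^ a := by
  intro n
  induction n with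
  | zero =>
    intro a x ha han hx
    have : a = 0 := le_antisymm (by exact_mod_cast han) ha
    simp [this]
  | succ m ih =>
    intro a x ha han hx
    rcases le_or_gt a 1 with h1 | h1
    · calc Real.Gamma (x + a) ≤ Real.Gamma x * x ^ a := interp_upper (by linarith) ha h1
        _ ≤ Real.Gamma x * (x + a) ^ a := by
          apply mul_le_mul_of_nonneg_left _ (Real.Gamma_pos_of_pos (by linarith : (0:ℝ) < x)).le
          exact Real.rpow_le_rpow (by linarith) (by linarith) ha
    · have hxa1 : (0:ℝ) < x + a - 1 := by linarith
      have key : Real.Gamma (x + a) = (x + a - 1) * Real.Gamma (x + (a - 1)) := by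
        have hre : x + a = (x + (a - 1)) + 1 := by ring
        rw [hre, Real.Gamma_add_one (by nlinarith : (0:ℝ) < x + (a - 1)).ne']
        ring_nf
      rw [key]
      have ih' := ih (a - 1) x (by linarith) (by push_cast at han ⊢; linarith) hx
      have hpos : (0:ℝ) < x + (a - 1) := by linarith
      calc (x + a - 1) * Real.Gamma (x + (a - 1))
          ≤ (x + a - 1) * (Real.Gamma x * (x + (a - 1)) ^ (a - 1)) :=
            mul_le_mul_of_nonneg_left ih' (by linarith)
        _ = Real.Gamma x * ((x + a - 1) ^ (a - 1) * (x + a - 1)) := by ring_nf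
        _ = Real.Gamma x * (x + a - 1) ^ a := by
            rw [← Real.rpow_add_one (by linarith : (x + a - 1) ≠ 0)]
            ring_nf
        _ ≤ Real.Gamma x * (x + a) ^ a := by
            apply mul_le_mul_of_nonneg_left _ (Real.Gamma_pos_of_pos (by linarith : (0:ℝ) < x)).le
            exact Real.rpow_le_rpow (by linarith) (by linarith) ha

lemma gamma_add_le {a x : ℝ} (ha : 0 ≤ a) (hx : 1 ≤ x) :
    Real.Gamma (x + a) ≤ Real.Gamma x * (x + a) ^ a :=
  gamma_add_le_aux ⌈a⌉₊ a x ha (Nat.le_ceil a) hx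

lemma tendsto_x_div_x_add (c : ℝ) :
    Tendsto (fun x : ℝ => x / (x + c)) atTop (nhds 1) := by
  have h : Tendsto (fun x : ℝ => c / (x + c)) atTop (nhds 0) :=
    Tendsto.div_atTop tendsto_const_nhds (tendsto_atTop_add_const_right _ c tendsto_id)
  have h2 : Tendsto (fun x : ℝ => 1 - c / (x + c)) atTop (nhds 1) := by
    simpa using tendsto_const_nhds.sub h
  apply h2.congr'
  filter_upwards [eventually_gt_atTop (max 0 (-c))] with x hx
  have hxc : x + c ≠ 0 := by
    have := lt_of_le_of_lt (le_max_right 0 (-c)) hx; intro hc; nlinarith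
  field_simp
  ring

lemma tendsto_x_add_div_x (c : ℝ) :
    Tendsto (fun x : ℝ => (x + c) / x) atTop (nhds 1) := by
  have := (tendsto_x_div_x_add c).inv₀ one_ne_zero
  rw [inv_one] at this
  apply this.congr'
  filter_upwards [eventually_gt_atTop (max 0 (-c))] with x hx
  have hx0 : (0:ℝ) < x := lt_of_le_of_lt (le_max_left 0 (-c)) hx
  have hxc : x + c ≠ 0 := by
    have := lt_of_le_of_lt (le_max_right 0 (-c)) hx; intro hc; nlinarith
  rw [inv_div]

lemma tendsto_gamma_ratio_aux : ∀ n : ℕ, ∀ a : ℝ, 0 ≤ a → a ≤ n →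
    Tendsto (fun x : ℝ => Real.Gamma (x + a) / (Real.Gamma x * x ^ a)) atTop (nhds 1) := by
  intro n
  induction n with
  | zero =>
    intro a ha han
    have : a = 0 := le_antisymm (by exact_mod_cast han) ha
    subst this
    apply tendsto_const_nhds.congr'
    filter_upwards [eventually_gt_atTop (0:ℝ)] with x hx
    rw [add_zero, Real.rpow_zero, mul_one, div_self (Real.Gamma_pos_of_pos hx).ne']
  | succ m ih =>
    intro a ha han
    rcases le_or_gt a 1 with h1 | h1
    · have hlow : Tendsto (fun x : ℝ => (x / (x + a)) ^ (1 - a)) atTop (nhds 1) := by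
        have := (tendsto_x_div_x_add a).rpow_const (p := 1 - a) (Or.inr (by linarith))
        simpa using this
      apply tendsto_of_tendsto_of_tendsto_of_le_of_le' hlow tendsto_const_nhds
      · filter_upwards [eventually_ge_atTop (1:ℝ)] with x hx
        have hx0 : (0:ℝ) < x := by linarith
        have hxa : (0:ℝ) < x + a := by linarith
        rw [Real.div_rpow hx0.le hxa.le,
          div_le_div_iff₀ (Real.rpow_pos_of_pos hxa _) (by positivity)]
        have hxx : x ^ (1 - a) * (Real.Gamma x * x ^ a) = Real.Gamma x * x := by
          rw [mul_comm (Real.Gamma x), ← mul_assoc, ← Real.rpow_add hx0]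
          norm_num [mul_comm]
        rw [hxx]
        exact interp_lower hx0 ha h1
      · filter_upwards [eventually_ge_atTop (1:ℝ)] with x hx
        have hx0 : (0:ℝ) < x := by linarith
        rw [div_le_one (by positivity)]
        exact interp_upper hx0 ha h1
    · have hm : 1 ≤ m := by
        by_contra hc
        push_cast [Nat.lt_one_iff.mp (not_le.mp hc)] at han
        linarith
      have ih' := ih (a - 1) (by linarith) (by push_cast at han ⊢; linarith)
      have htot := (tendsto_x_add_div_x (a - 1)).mul ih'
      rw [mul_one] at htot
      apply htot.congr'
      filter_upwards [eventually_gt_atTop (1:ℝ)] with x hx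
      have hx0 : (0:ℝ) < x := by linarith
      have hkey : Real.Gamma (x + a) = (x + (a - 1)) * Real.Gamma (x + (a - 1)) := by
        have hre : x + a = (x + (a - 1)) + 1 := by ring
        rw [hre, Real.Gamma_add_one (by nlinarith : (0:ℝ) < x + (a - 1)).ne']
      have hpow : x ^ a = x ^ (a - 1) * x := by
        rw [← Real.rpow_add_one hx0.ne']; ring_nf
      rw [hkey, hpow]
      rw [div_mul_div_comm]
      congr 1
      ring

lemma tendsto_gamma_ratio (a : ℝ) (ha : 0 ≤ a) :
    Tendsto (fun x : ℝ => Real.Gamma (x + a) / (Real.Gamma x * x ^ a)) atTop (nhds 1) :=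
  tendsto_gamma_ratio_aux ⌈a⌉₊ a ha (Nat.le_ceil a)

/- ### Specific sequences -/

/-- Normalized Gamma ratio coefficient. -/
def cc (L b : ℝ) (N k : ℕ) : ℝ :=
  Real.Gamma ((b + 1) * N + L + 1) /
    (Real.Gamma ((b + 1) * N + 1 - k) * ((b + 1) * N + L + 1) ^ (L + (k : ℝ)))

/-- Mittag-Leffler coefficient. -/
def gg (L y : ℝ) (k : ℕ) : ℝ := y ^ k / Real.Gamma ((k : ℝ) + L + 1)

/-- Truncated coefficient. -/
def ff (L b y : ℝ) (N k : ℕ) : ℝ := if k < N then cc L b N k * gg L y k else 0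

lemma tendsto_cc (L b : ℝ) (hL : 0 < L) (hb : 0 < b) (k : ℕ) :
    Tendsto (fun N : ℕ => cc L b N k) atTop (nhds 1) := by
  set a : ℝ := L + (k : ℝ) with ha_def
  have ha : 0 ≤ a := by positivity
  have hx : Tendsto (fun N : ℕ => (b + 1) * (N : ℝ) + 1 - k) atTop atTop := by
    have h1 : Tendsto (fun N : ℕ => (b + 1) * (N : ℝ)) atTop atTop :=
      Tendsto.const_mul_atTop (by linarith) tendsto_natCast_atTop_atTop
    have := tendsto_atTop_add_const_right atTop (1 - (k : ℝ)) h1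
    apply this.congr
    intro N; ring
  have h1 : Tendsto (fun N : ℕ =>
      Real.Gamma (((b + 1) * N + 1 - k) + a) /
        (Real.Gamma ((b + 1) * N + 1 - k) * ((b + 1) * N + 1 - k) ^ a)) atTop (nhds 1) :=
    (tendsto_gamma_ratio a ha).comp hx
  have h2 : Tendsto (fun N : ℕ =>
      (((b + 1) * (N : ℝ) + 1 - k) / (((b + 1) * N + 1 - k) + a)) ^ a) atTop (nhds 1) := by
    have := ((tendsto_x_div_x_add a).comp hx).rpow_const (p := a) (Or.inr ha)
    simpa using this
  have htot := h1.mul h2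
  rw [mul_one] at htot
  apply htot.congr'
  filter_upwards [eventually_ge_atTop (k + 1)] with N hN
  have hNk : (k : ℝ) + 1 ≤ (N : ℝ) := by exact_mod_cast hN
  have hx0 : (0 : ℝ) < (b + 1) * N + 1 - k := by nlinarith [Nat.cast_nonneg (α := ℝ) N]
  have hxa : (0 : ℝ) < ((b + 1) * N + 1 - k) + a := by positivity
  have hMe : (b + 1) * (N:ℝ) + L + 1 = ((b + 1) * N + 1 - k) + a := by rw [ha_def]; ring
  rw [cc, hMe, ← ha_def]
  rw [Real.div_rpow hx0.le hxa.le, div_mul_div_comm]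
  have hd1 : 0 < Real.Gamma ((b + 1) * (N:ℝ) + 1 - k) * ((b + 1) * (N:ℝ) + 1 - k) ^ a *
      (((b + 1) * (N:ℝ) + 1 - k) + a) ^ a := by
    have := Real.Gamma_pos_of_pos hx0
    have := Real.rpow_pos_of_pos hx0 a
    have := Real.rpow_pos_of_pos hxa a
    positivity
  have hd2 : 0 < Real.Gamma ((b + 1) * (N:ℝ) + 1 - k) * (((b + 1) * (N:ℝ) + 1 - k) + a) ^ a := by
    have := Real.Gamma_pos_of_pos hx0
    have := Real.rpow_pos_of_pos hxa a
    positivity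
  rw [div_eq_div_iff hd1.ne' hd2.ne']
  ring

lemma cc_mem (L b : ℝ) (hL : 0 < L) (hb : 0 < b) {N k : ℕ} (hN : 1 ≤ N) (hk : k < N) :
    0 ≤ cc L b N k ∧ cc L b N k ≤ 1 := by
  have hN1 : (1 : ℝ) ≤ (N : ℝ) := by exact_mod_cast hN
  have hkN : (k : ℝ) + 1 ≤ (N : ℝ) := by exact_mod_cast hk
  have hx1 : (1 : ℝ) ≤ (b + 1) * N + 1 - k := by nlinarith
  have hx0 : (0 : ℝ) < (b + 1) * N + 1 - k := by linarith
  have ha : (0:ℝ) ≤ L + k := by positivity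
  have hMe : (b + 1) * (N:ℝ) + L + 1 = ((b + 1) * N + 1 - k) + (L + k) := by ring
  constructor
  · apply div_nonneg
    · exact (Real.Gamma_pos_of_pos (by nlinarith : (0:ℝ) < (b+1)*N + L + 1)).le
    · positivity
  · rw [cc, div_le_one (by positivity)]
    calc Real.Gamma ((b + 1) * (N:ℝ) + L + 1)
        = Real.Gamma (((b + 1) * N + 1 - k) + (L + k)) := by rw [hMe]
      _ ≤ Real.Gamma ((b + 1) * N + 1 - k) * (((b + 1) * N + 1 - k) + (L + k)) ^ (L + k) :=
          gamma_add_le ha hx1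
      _ = Real.Gamma ((b + 1) * N + 1 - k) * ((b + 1) * N + L + 1) ^ (L + (k:ℝ)) := by
          rw [← hMe]

lemma summable_gg (L y : ℝ) (hL : 0 < L) (hy : 0 < y) : Summable (gg L y) := by
  apply summable_of_ratio_test_tendsto_lt_one (l := 0) one_pos
  · filter_upwards with k
    have : 0 < gg L y k := by
      apply div_pos (pow_pos hy k) (Real.Gamma_pos_of_pos (by positivity))
    exact this.ne'
  · have h : ∀ k : ℕ, ‖gg L y (k + 1)‖ / ‖gg L y k‖ = y / ((k : ℝ) + L + 1) := by
      intro k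
      have hΓpos : 0 < Real.Gamma ((k : ℝ) + L + 1) :=
        Real.Gamma_pos_of_pos (by positivity)
      have hΓpos' : 0 < Real.Gamma (((k : ℕ) + 1 : ℕ) + L + 1) := by
        apply Real.Gamma_pos_of_pos; push_cast; positivity
      have hval : gg L y (k + 1) = y ^ (k + 1) / (((k : ℝ) + L + 1) * Real.Gamma ((k:ℝ) + L + 1)) := by
        rw [gg]
        congr 1
        push_cast
        rw [show (k:ℝ) + 1 + L + 1 = ((k:ℝ) + L + 1) + 1 by ring,
          Real.Gamma_add_one (by positivity : (k:ℝ) + L + 1 ≠ 0)]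
      rw [hval, gg, Real.norm_eq_abs, Real.norm_eq_abs, abs_of_pos (by positivity),
        abs_of_pos (by positivity)]
      rw [pow_succ]
      field_simp
    apply Tendsto.congr (fun k => (h k).symm)
    apply Tendsto.div_atTop tendsto_const_nhds
    have h2 := tendsto_atTop_add_const_right atTop (L + 1) (tendsto_natCast_atTop_atTop (R := ℝ))
    exact h2.congr (fun k => by ring)

set_option maxHeartbeats 2000000 in
theorem qhat_singular_origin_limit (L b : ℝ) (hL : 0 < L) (hb : 0 < b)
    (s t χ : ℝ) (hs : 0 < s) (ht : 0 < t) (hχ : 0 < χ) (hχL : χ ^ 2 ≠ L) :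
    Tendsto (fun N : ℕ =>
      let nN : ℝ := (b + 1) * N
      let δN : ℝ := (nN + L + 1) / N
      let zN : ℝ := s / Real.sqrt (N * δN)
      let wN : ℝ := t / Real.sqrt (N * δN)
      let lamN : ℝ := χ / Real.sqrt (N * δN)
      qhat nN L (N - 1) (zN * wN) (lamN ^ 2) * (zN * wN) ^ L *
        ((1 + zN ^ 2) * (1 + wN ^ 2)) ^ (-(nN + L + 1) / 2))
      atTop
      (nhds ((1 / (χ ^ 2 - L)) * (s * t) ^ L *
        ((χ ^ 2 - L) * mittagLeffler1 (L + 1) (s * t) + 1 / Real.Gamma L) *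
        Real.exp (-(s ^ 2 + t ^ 2) / 2))) := by
  have hχL' : χ ^ 2 - L ≠ 0 := sub_ne_zero_of_ne hχL
  have hst : (0:ℝ) < s * t := by positivity
  have hMpos : ∀ N : ℕ, (0:ℝ) < (b + 1) * N + L + 1 := fun N => by
    have : (0:ℝ) ≤ (N:ℝ) := Nat.cast_nonneg N
    nlinarith
  have hgg_nonneg : ∀ k, 0 ≤ gg L (s * t) k := fun k => by
    rw [gg]
    have := Real.Gamma_pos_of_pos (show (0:ℝ) < (k:ℝ) + L + 1 by positivity)
    positivity
  -- limit of the series part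
  have hSum : Tendsto (fun N : ℕ => ∑' k, ff L b (s * t) N k) atTop
      (nhds (mittagLeffler1 (L + 1) (s * t))) := by
    have hml : mittagLeffler1 (L + 1) (s * t) = ∑' k, gg L (s * t) k := by
      rw [mittagLeffler1]
      exact tsum_congr fun k => by rw [gg, add_assoc]
    rw [hml]
    apply tendsto_tsum_of_dominated_convergence (summable_gg L (s * t) hL hst)
    · intro k
      have h := (tendsto_cc L b hL hb k).mul_const (gg L (s * t) k)
      rw [one_mul] at h
      apply h.congr'
      filter_upwards [eventually_ge_atTop (k + 1)] with N hN
      rw [ff, if_pos (show k < N from hN)]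
    · filter_upwards [eventually_ge_atTop 1] with N hN k
      rw [ff]
      by_cases hk : k < N
      · rw [if_pos hk]
        obtain ⟨h0, h1⟩ := cc_mem L b hL hb hN hk
        rw [Real.norm_eq_abs, abs_of_nonneg (mul_nonneg h0 (hgg_nonneg k))]
        calc cc L b N k * gg L (s * t) k ≤ 1 * gg L (s * t) k :=
              mul_le_mul_of_nonneg_right h1 (hgg_nonneg k)
          _ = gg L (s * t) k := one_mul _
      · rw [if_neg hk, norm_zero]
        exact hgg_nonneg k
  -- limit of singular prefactor
  have hU : Tendsto (fun N : ℕ => 1 / ((b + 1) * N * (χ ^ 2 / ((b + 1) * N + L + 1)) - L))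
      atTop (nhds ((χ ^ 2 - L)⁻¹)) := by
    have hy : Tendsto (fun N : ℕ => (b + 1) * (N : ℝ)) atTop atTop :=
      Tendsto.const_mul_atTop (by linarith) tendsto_natCast_atTop_atTop
    have h1 : Tendsto (fun N : ℕ =>
        ((b + 1) * (N : ℝ)) / ((b + 1) * N + (L + 1))) atTop (nhds 1) :=
      (tendsto_x_div_x_add (L + 1)).comp hy
    have h2 := (h1.const_mul (χ ^ 2)).sub_const L
    rw [mul_one] at h2
    have h3 := h2.inv₀ hχL'
    apply h3.congr
    intro N
    rw [one_div]
    congr 1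
    ring
  have hC0 := tendsto_cc L b hL hb 0
  -- limit of exponential weights
  have hW : ∀ u : ℝ, 0 < u → Tendsto (fun N : ℕ =>
      (1 + u / ((b + 1) * N + L + 1)) ^ (-(((b + 1) * (N:ℝ) + L + 1) / 2))) atTop
      (nhds (Real.exp (-(u / 2)))) := by
    intro u hu
    have hy : Tendsto (fun N : ℕ => ((b + 1) * (N : ℝ) + L + 1) / 2) atTop atTop := by
      apply Tendsto.atTop_div_const two_pos
      apply tendsto_atTop_add_const_right
      apply tendsto_atTop_add_const_right
      exact Tendsto.const_mul_atTop (by linarith) tendsto_natCast_atTop_atTop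
    have h1 := (Real.tendsto_one_add_div_rpow_exp (u / 2)).comp hy
    have h2 := h1.inv₀ (Real.exp_ne_zero _)
    rw [← Real.exp_neg] at h2
    apply h2.congr
    intro N
    have hM := hMpos N
    have harg : u / 2 / (((b + 1) * (N:ℝ) + L + 1) / 2) = u / ((b + 1) * N + L + 1) := by
      rw [div_div_div_comm]
      norm_num
    simp only [Function.comp_apply]
    rw [harg, ← Real.rpow_neg (by positivity : (0:ℝ) ≤ 1 + u / ((b + 1) * (N:ℝ) + L + 1))]
  -- combine
  have hG := ((hSum.const_mul ((s * t) ^ L)).add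
      ((hU.mul hC0).mul_const ((s * t) ^ L / Real.Gamma L))).mul
      ((hW (s ^ 2) (by positivity)).mul (hW (t ^ 2) (by positivity)))
  rw [mul_one] at hG
  have hval : (1 / (χ ^ 2 - L)) * (s * t) ^ L *
      ((χ ^ 2 - L) * mittagLeffler1 (L + 1) (s * t) + 1 / Real.Gamma L) *
      Real.exp (-(s ^ 2 + t ^ 2) / 2) =
      ((s * t) ^ L * mittagLeffler1 (L + 1) (s * t) +
        (χ ^ 2 - L)⁻¹ * ((s * t) ^ L / Real.Gamma L)) *
      (Real.exp (-(s ^ 2 / 2)) * Real.exp (-(t ^ 2 / 2))) := by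
    rw [← Real.exp_add, show -(s ^ 2 / 2) + -(t ^ 2 / 2) = -(s ^ 2 + t ^ 2) / 2 by ring]
    have hΓL : Real.Gamma L ≠ 0 := (Real.Gamma_pos_of_pos hL).ne'
    field_simp
  rw [hval]
  apply hG.congr'
  filter_upwards [eventually_ge_atTop 1] with N hN
  have hM := hMpos N
  have hN0 : (N:ℝ) ≠ 0 := Nat.cast_ne_zero.mpr (Nat.one_le_iff_ne_zero.mp hN)
  have hN1 : N - 1 + 1 = N := Nat.succ_pred_eq_of_pos hN
  have hNδ : (N:ℝ) * (((b + 1) * N + L + 1) / N) = (b + 1) * N + L + 1 := by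
    field_simp
  have hsqrt : Real.sqrt ((b + 1) * (N:ℝ) + L + 1) * Real.sqrt ((b + 1) * (N:ℝ) + L + 1)
      = (b + 1) * (N:ℝ) + L + 1 := Real.mul_self_sqrt hM.le
  simp only [hNδ]
  have hzw : s / Real.sqrt ((b + 1) * (N:ℝ) + L + 1) * (t / Real.sqrt ((b + 1) * (N:ℝ) + L + 1))
      = s * t / ((b + 1) * N + L + 1) := by
    rw [div_mul_div_comm, hsqrt]
  have hz2 : (s / Real.sqrt ((b + 1) * (N:ℝ) + L + 1)) ^ 2 = s ^ 2 / ((b + 1) * N + L + 1) := by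
    rw [div_pow, Real.sq_sqrt hM.le]
  have ht2 : (t / Real.sqrt ((b + 1) * (N:ℝ) + L + 1)) ^ 2 = t ^ 2 / ((b + 1) * N + L + 1) := by
    rw [div_pow, Real.sq_sqrt hM.le]
  have hlam2 : (χ / Real.sqrt ((b + 1) * (N:ℝ) + L + 1)) ^ 2 = χ ^ 2 / ((b + 1) * N + L + 1) := by
    rw [div_pow, Real.sq_sqrt hM.le]
  rw [hzw, hz2, ht2, hlam2, qhat, qS, hN1]
  -- sum part identity
  have e1 : (∑ k ∈ Finset.range N,
        Real.Gamma (L + (b + 1) * N + 1) /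
          (Real.Gamma ((k : ℝ) + L + 1) * Real.Gamma ((b + 1) * N + 1 - k)) *
          (s * t / ((b + 1) * N + L + 1)) ^ k) *
      (s * t / ((b + 1) * N + L + 1)) ^ L =
      (s * t) ^ L * ∑' k, ff L b (s * t) N k := by
    rw [tsum_eq_sum (s := Finset.range N)
      (fun k hk => by rw [ff, if_neg (by simpa using hk)])]
    rw [Finset.sum_mul, Finset.mul_sum]
    apply Finset.sum_congr rfl
    intro k hk
    have hkN : k < N := Finset.mem_range.mp hk
    have hkR : (k:ℝ) + 1 ≤ (N:ℝ) := by exact_mod_cast hkN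
    have hx0 : (0:ℝ) < (b + 1) * N + 1 - k := by nlinarith [Nat.cast_nonneg (α := ℝ) N]
    rw [ff, if_pos hkN, cc, gg]
    rw [show L + (b + 1) * (N:ℝ) + 1 = (b + 1) * N + L + 1 by ring]
    rw [Real.div_rpow (by positivity : (0:ℝ) ≤ s * t) hM.le, div_pow,
      Real.rpow_add hM L k, Real.rpow_natCast]
    have hΓ1 : Real.Gamma ((k : ℝ) + L + 1) ≠ 0 :=
      (Real.Gamma_pos_of_pos (by positivity)).ne'
    have hΓ2 : Real.Gamma ((b + 1) * (N:ℝ) + 1 - k) ≠ 0 := (Real.Gamma_pos_of_pos hx0).ne'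
    have hpL : ((b + 1) * (N:ℝ) + L + 1) ^ L ≠ 0 := (Real.rpow_pos_of_pos hM _).ne'
    have hpk : ((b + 1) * (N:ℝ) + L + 1) ^ k ≠ 0 := (pow_pos hM _).ne'
    field_simp
  -- singular part identity
  have e2 : 1 / ((b + 1) * (N:ℝ) * (χ ^ 2 / ((b + 1) * N + L + 1)) - L) *
      (Real.Gamma (L + (b + 1) * N + 1) /
        (Real.Gamma ((b + 1) * N + 1) * Real.Gamma L)) *
      (s * t / ((b + 1) * N + L + 1)) ^ L =
      1 / ((b + 1) * (N:ℝ) * (χ ^ 2 / ((b + 1) * N + L + 1)) - L) * cc L b N 0 *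
        ((s * t) ^ L / Real.Gamma L) := by
    rw [cc]
    push_cast
    rw [show L + (b + 1) * (N:ℝ) + 1 = (b + 1) * N + L + 1 by ring,
      show (b + 1) * (N:ℝ) + 1 - 0 = (b + 1) * N + 1 by ring,
      show L + (0:ℝ) = L by ring]
    rw [Real.div_rpow (by positivity : (0:ℝ) ≤ s * t) hM.le]
    have hΓ2 : Real.Gamma ((b + 1) * (N:ℝ) + 1) ≠ 0 :=
      (Real.Gamma_pos_of_pos (by positivity)).ne'
    have hΓL : Real.Gamma L ≠ 0 := (Real.Gamma_pos_of_pos hL).ne'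
    have hpL : ((b + 1) * (N:ℝ) + L + 1) ^ L ≠ 0 := (Real.rpow_pos_of_pos hM _).ne'
    field_simp
  -- weight identity
  have e3 : ((1 + s ^ 2 / ((b + 1) * (N:ℝ) + L + 1)) * (1 + t ^ 2 / ((b + 1) * N + L + 1))) ^
        (-((b + 1) * (N:ℝ) + L + 1) / 2) =
      (1 + s ^ 2 / ((b + 1) * (N:ℝ) + L + 1)) ^ (-(((b + 1) * (N:ℝ) + L + 1) / 2)) *
      (1 + t ^ 2 / ((b + 1) * (N:ℝ) + L + 1)) ^ (-(((b + 1) * (N:ℝ) + L + 1) / 2)) := by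
    rw [show -((b + 1) * (N:ℝ) + L + 1) / 2 = -(((b + 1) * (N:ℝ) + L + 1) / 2) by ring]
    rw [Real.mul_rpow (by positivity) (by positivity)]
  rw [← e3, ← e1, ← e2]
  ring
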